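/- arXiv:2402.03088 — 2 statements merged into one kernel-verified Lean document; each statement's English description precedes it below -/
import Mathlib

section
/- Let H_A and H_B be finite-dimensional, let N be a quantum channel on H_A ⊗ H_B, and let ξ_1 = |ν_1⟩⟨ν_1|, ξ_2 = |ν_2⟩⟨ν_2| be pure states on H_B with ⟨ν_1|ν_2⟩ ≠ 0. Define channels N_{A,i}(ρ) = Tr_B[N(ρ ⊗ ξ_i)] for i = 1, 2. If both N_{A,1} and N_{A,2} are unitary channels, then N_{A,1} = N_{A,2}. -/
open Matrix BigOperators
open scoped Kronecker ComplexOrder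

noncomputable section

/-- Partial trace over the second tensor factor. -/
def ptraceB {a b : Type*} [Fintype b] (M : Matrix (a × b) (a × b) ℂ) : Matrix a a ℂ :=
  Matrix.of fun i j => ∑ k, M (i, k) (j, k)

/-- Partial trace over the first tensor factor. -/
def ptraceA {a b : Type*} [Fintype a] (M : Matrix (a × b) (a × b) ℂ) : Matrix b b ℂ :=
  Matrix.of fun i j => ∑ k, M (k, i) (k, j)

/-- A quantum state: positive semidefinite with trace one. -/
def IsState {m : Type*} [Fintype m] (ρ : Matrix m m ℂ) : Prop :=
  ρ.PosSemidef ∧ ρ.trace = 1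

/-- A quantum channel: trace-preserving and completely positive (Kraus form). -/
def IsCPTP {m : Type*} [Fintype m] (Φ : Matrix m m ℂ →ₗ[ℂ] Matrix m m ℂ) : Prop :=
  (∀ X, (Φ X).trace = X.trace) ∧
  ∃ (k : ℕ) (K : Fin k → Matrix m m ℂ), ∀ X, Φ X = ∑ i, K i * X * (K i)ᴴ

def IsUnitary {m : Type*} [Fintype m] [DecidableEq m] (U : Matrix m m ℂ) : Prop :=
  U * Uᴴ = 1 ∧ Uᴴ * U = 1


lemma sum_mul_star_self_eq_zero {ι : Type*} [Fintype ι] (w : ι → ℂ)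
    (h : ∑ t, w t * star (w t) = 0) : ∀ t, w t = 0 := by
  intro t
  have h' : ∑ t, Complex.normSq (w t) = 0 := by
    have h2 : ((∑ t, Complex.normSq (w t) : ℝ) : ℂ) = 0 := by
      rw [Complex.ofReal_sum]
      rw [← h]
      refine Finset.sum_congr rfl fun s _ => ?_
      rw [Complex.star_def, Complex.mul_conj]
    exact_mod_cast h2
  have := (Finset.sum_eq_zero_iff_of_nonneg
    (fun i _ => Complex.normSq_nonneg (w i))).mp h' t (Finset.mem_univ t)
  exact Complex.normSq_eq_zero.mp this

lemma rankone {n ι : Type*} [Fintype n] [Fintype ι] (v : ι → n → ℂ) (x : n → ℂ)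
    (h : ∀ a a', ∑ t, v t a * star (v t a') = x a * star (x a')) (t : ι) :
    ∃ c : ℂ, v t = c • x := by
  by_cases hx : x = 0
  · refine ⟨0, funext fun a => ?_⟩
    have h0 := h a a
    rw [hx] at h0
    simp only [Pi.zero_apply, mul_zero, zero_mul] at h0
    have := sum_mul_star_self_eq_zero (fun s => v s a) h0 t
    simpa [hx] using this
  · obtain ⟨a₀, ha₀⟩ : ∃ a₀, x a₀ ≠ 0 := by
      by_contra hc; push_neg at hc; exact hx (funext hc)
    refine ⟨v t a₀ / x a₀, funext fun a => ?_⟩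
    have key : ∀ s, v s a * x a₀ - v s a₀ * x a = 0 := by
      apply sum_mul_star_self_eq_zero
      have expand : ∑ s, (v s a * x a₀ - v s a₀ * x a) * star (v s a * x a₀ - v s a₀ * x a)
          = (∑ s, v s a * star (v s a)) * (x a₀ * star (x a₀))
            - (∑ s, v s a * star (v s a₀)) * (x a₀ * star (x a))
            - (∑ s, v s a₀ * star (v s a)) * (x a * star (x a₀))
            + (∑ s, v s a₀ * star (v s a₀)) * (x a * star (x a)) := by
        simp only [Finset.sum_mul, ← Finset.sum_sub_distrib, ← Finset.sum_add_distrib]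
        refine Finset.sum_congr rfl fun s _ => ?_
        simp only [star_sub, star_mul']
        ring
      rw [expand, h a a, h a a₀, h a₀ a, h a₀ a₀]
      ring
    have hk := key t
    have : v t a * x a₀ = v t a₀ * x a := by linear_combination hk
    rw [Pi.smul_apply, smul_eq_mul, div_mul_eq_mul_div, eq_div_iff ha₀]
    linear_combination this


lemma eigen_scalar {n : Type*} [Fintype n] [DecidableEq n] (B : Matrix n n ℂ)
    (h : ∀ x : n → ℂ, ∃ c : ℂ, B.mulVec x = c • x) :
    ∃ c : ℂ, B = c • (1 : Matrix n n ℂ) := by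
  cases isEmpty_or_nonempty n with
  | inl hE => exact ⟨0, by ext i j; exact (IsEmpty.false i).elim⟩
  | inr hNE =>
  obtain ⟨a₀⟩ := hNE
  have single : ∀ j i, B i j = B j j * (if i = j then 1 else 0) := by
    intro j i
    obtain ⟨c, hc⟩ := h (Pi.single j 1)
    have hi := congrFun hc i
    have hj := congrFun hc j
    simp [Matrix.mulVec, dotProduct, Pi.single_apply, mul_ite] at hi hj
    rw [hi, hj]
    by_cases hij : i = j <;> simp [hij]
  have diag : ∀ a, B a a = B a₀ a₀ := by
    intro a
    by_cases ha : a = a₀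
    · rw [ha]
    · obtain ⟨c, hc⟩ := h (Pi.single a 1 + Pi.single a₀ 1)
      have hi := congrFun hc a
      have hj := congrFun hc a₀
      simp [Matrix.mulVec, dotProduct, Pi.single_apply, mul_add, mul_ite,
        Finset.sum_add_distrib] at hi hj
      have h1 : B a a₀ = 0 := by rw [single a₀ a, if_neg ha, mul_zero]
      have h2 : B a₀ a = 0 := by rw [single a a₀, if_neg (Ne.symm ha), mul_zero]
      rw [h1, add_zero, if_neg ha, add_zero] at hi
      rw [h2, zero_add, if_neg (Ne.symm ha), zero_add] at hj
      rw [hi, hj]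
  refine ⟨B a₀ a₀, ?_⟩
  ext i j
  rw [single j i, diag j]
  by_cases hij : i = j <;> simp [hij, Matrix.one_apply]

lemma conj_vecMulVec {n : Type*} [Fintype n] (M : Matrix n n ℂ) (x : n → ℂ) :
    M * Matrix.vecMulVec x (star x) * Mᴴ
      = Matrix.vecMulVec (M.mulVec x) (star (M.mulVec x)) := by
  ext a a'
  simp only [Matrix.mul_apply, Matrix.vecMulVec_apply, Matrix.conjTranspose_apply,
    Pi.star_apply, Matrix.mulVec, dotProduct, Finset.sum_mul, Finset.mul_sum, star_sum,
    star_mul']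
  refine Finset.sum_congr rfl fun b _ => Finset.sum_congr rfl fun c _ => ?_
  ring

lemma kraus_unitary {n ι : Type*} [Fintype n] [DecidableEq n] [Fintype ι]
    (K : ι → Matrix n n ℂ) (U : Matrix n n ℂ) (hU : IsUnitary U)
    (h : ∀ ρ : Matrix n n ℂ, ∑ t, K t * ρ * (K t)ᴴ = U * ρ * Uᴴ) (t : ι) :
    ∃ c : ℂ, K t = c • U := by
  set B : ι → Matrix n n ℂ := fun s => Uᴴ * K s with hB
  have hBid : ∀ ρ, ∑ s, B s * ρ * (B s)ᴴ = ρ := by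
    intro ρ
    have step : ∑ s, B s * ρ * (B s)ᴴ = Uᴴ * (∑ s, K s * ρ * (K s)ᴴ) * U := by
      rw [Finset.mul_sum, Finset.sum_mul]
      refine Finset.sum_congr rfl fun s _ => ?_
      simp only [hB, Matrix.conjTranspose_mul, Matrix.conjTranspose_conjTranspose,
        Matrix.mul_assoc]
    rw [step, h ρ, ← Matrix.mul_assoc, ← Matrix.mul_assoc, hU.2, Matrix.one_mul,
      Matrix.mul_assoc, hU.2, Matrix.mul_one]
  have heig : ∀ x : n → ℂ, ∃ c : ℂ, (B t).mulVec x = c • x := by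
    intro x
    apply rankone (fun s => (B s).mulVec x) x ?_ t
    intro a a'
    have h0 := congrFun (congrFun (hBid (Matrix.vecMulVec x (star x))) a) a'
    have h1 : ∀ s, (B s * Matrix.vecMulVec x (star x) * (B s)ᴴ) a a'
        = (B s).mulVec x a * star ((B s).mulVec x a') := by
      intro s
      rw [conj_vecMulVec]
      simp [Matrix.vecMulVec_apply]
    calc ∑ s, (B s).mulVec x a * star ((B s).mulVec x a')
        = ∑ s, (B s * Matrix.vecMulVec x (star x) * (B s)ᴴ) a a' :=
          Finset.sum_congr rfl fun s _ => (h1 s).symm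
      _ = (∑ s, B s * Matrix.vecMulVec x (star x) * (B s)ᴴ) a a' := by
          rw [Matrix.sum_apply]
      _ = x a * star (x a') := by rw [h0]; simp [Matrix.vecMulVec_apply]
  obtain ⟨c, hc⟩ := eigen_scalar (B t) heig
  refine ⟨c, ?_⟩
  have hK : U * B t = K t := by
    rw [hB, ← Matrix.mul_assoc, hU.1, Matrix.one_mul]
  rw [← hK, hc, Matrix.mul_smul, Matrix.mul_one]

lemma ptraceB_sum {a b ι : Type*} [Fintype b] [Fintype ι] (M : ι → Matrix (a × b) (a × b) ℂ) :
    ptraceB (∑ t, M t) = ∑ t, ptraceB (M t) := by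
  ext i j
  simp only [ptraceB, Matrix.of_apply, Matrix.sum_apply]
  exact Finset.sum_comm

lemma trace_ptraceB {a b : Type*} [Fintype a] [Fintype b] (M : Matrix (a × b) (a × b) ℂ) :
    (ptraceB M).trace = M.trace := by
  simp only [Matrix.trace, Matrix.diag, ptraceB, Matrix.of_apply]
  rw [Fintype.sum_prod_type]

lemma ptraceB_kraus {mA mB : Type*} [Fintype mA] [Fintype mB]
    (K : Matrix (mA × mB) (mA × mB) ℂ) (σ : Matrix mA mA ℂ) (ν μ : mB → ℂ) :
    ptraceB (K * (σ ⊗ₖ Matrix.vecMulVec ν (star μ)) * Kᴴ)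
      = ∑ b : mB, (Matrix.of fun a c => ∑ d, K (a,b) (c,d) * ν d) * σ *
          ((Matrix.of fun a c => ∑ d, K (a,b) (c,d) * μ d))ᴴ := by
  ext a₁ a₂
  simp only [ptraceB, Matrix.of_apply, Matrix.sum_apply, Matrix.mul_apply,
    Matrix.conjTranspose_apply, Pi.star_apply, Matrix.kroneckerMap_apply,
    Matrix.vecMulVec_apply, star_sum, star_mul', Fintype.sum_prod_type,
    Finset.sum_mul, Finset.mul_sum]
  -- now both sides are nested sums; massage
  refine Finset.sum_congr rfl fun b _ => Finset.sum_congr rfl fun c' _ =>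
    Finset.sum_congr rfl fun d' _ => Finset.sum_congr rfl fun c _ =>
    Finset.sum_congr rfl fun d _ => ?_
  ring

lemma trace_mul_stdBasis {n : Type*} [Fintype n] [DecidableEq n] (M : Matrix n n ℂ) (i j : n) :
    (M * Matrix.single j i 1).trace = M i j := by
  simp [Matrix.trace, Matrix.diag, Matrix.mul_apply, Matrix.single, Finset.sum_ite_eq,
    Finset.sum_ite_eq', ite_and]

lemma trace_stdBasis {n : Type*} [Fintype n] [DecidableEq n] (i j : n) :
    (Matrix.single j i (1:ℂ)).trace = if i = j then 1 else 0 := by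
  simp [Matrix.trace, Matrix.diag, Matrix.single, ite_and, Finset.sum_ite_eq,
    Finset.sum_ite_eq', eq_comm]

lemma trace_vecMulVec {n : Type*} [Fintype n] (ν μ : n → ℂ) :
    (Matrix.vecMulVec ν (star μ)).trace = star μ ⬝ᵥ ν := by
  simp [Matrix.trace, Matrix.diag, Matrix.vecMulVec_apply, dotProduct, mul_comm]


/-- Two non-orthogonal pure environment states inducing unitary channels induce the
same channel. -/
theorem stmt_1 {mA mB : Type*} [Fintype mA] [DecidableEq mA] [Fintype mB] [DecidableEq mB]
    (N : Matrix (mA × mB) (mA × mB) ℂ →ₗ[ℂ] Matrix (mA × mB) (mA × mB) ℂ)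
    (hN : IsCPTP N)
    (ν₁ ν₂ : mB → ℂ) (hν₁ : star ν₁ ⬝ᵥ ν₁ = 1) (hν₂ : star ν₂ ⬝ᵥ ν₂ = 1)
    (hover : star ν₁ ⬝ᵥ ν₂ ≠ 0)
    (ξ₁ ξ₂ : Matrix mB mB ℂ)
    (hξ₁ : ξ₁ = Matrix.vecMulVec ν₁ (star ν₁)) (hξ₂ : ξ₂ = Matrix.vecMulVec ν₂ (star ν₂))
    (U₁ U₂ : Matrix mA mA ℂ) (hU₁ : IsUnitary U₁) (hU₂ : IsUnitary U₂)
    (hNA₁ : ∀ ρ : Matrix mA mA ℂ, ptraceB (N (ρ ⊗ₖ ξ₁)) = U₁ * ρ * U₁ᴴ)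
    (hNA₂ : ∀ ρ : Matrix mA mA ℂ, ptraceB (N (ρ ⊗ₖ ξ₂)) = U₂ * ρ * U₂ᴴ) :
    ∀ ρ : Matrix mA mA ℂ, ptraceB (N (ρ ⊗ₖ ξ₁)) = ptraceB (N (ρ ⊗ₖ ξ₂)) := by
  intro ρ
  rw [hNA₁, hNA₂]
  cases isEmpty_or_nonempty mA with
  | inl hE => ext i j; exact (IsEmpty.false i).elim
  | inr hNE =>
  obtain ⟨a₀⟩ := hNE
  obtain ⟨hTP, k, K, hK⟩ := hN
  set A : Fin k → mB → (mB → ℂ) → Matrix mA mA ℂ :=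
    fun t b ν => Matrix.of fun a c => ∑ d, K t (a,b) (c,d) * ν d with hA
  have key : ∀ (σ : Matrix mA mA ℂ) (ν μ : mB → ℂ),
      ptraceB (N (σ ⊗ₖ Matrix.vecMulVec ν (star μ)))
        = ∑ p : Fin k × mB, A p.1 p.2 ν * σ * (A p.1 p.2 μ)ᴴ := by
    intro σ ν μ
    rw [hK, ptraceB_sum, Fintype.sum_prod_type]
    exact Finset.sum_congr rfl fun t _ => ptraceB_kraus (K t) σ ν μ
  have h1 : ∀ σ : Matrix mA mA ℂ,
      ∑ p : Fin k × mB, A p.1 p.2 ν₁ * σ * (A p.1 p.2 ν₁)ᴴ = U₁ * σ * U₁ᴴ := fun σ => by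
    rw [← key, ← hξ₁, hNA₁]
  have h2 : ∀ σ : Matrix mA mA ℂ,
      ∑ p : Fin k × mB, A p.1 p.2 ν₂ * σ * (A p.1 p.2 ν₂)ᴴ = U₂ * σ * U₂ᴴ := fun σ => by
    rw [← key, ← hξ₂, hNA₂]
  choose c hc using fun p => kraus_unitary (fun p : Fin k × mB => A p.1 p.2 ν₁) U₁ hU₁ h1 p
  choose d hd using fun p => kraus_unitary (fun p : Fin k × mB => A p.1 p.2 ν₂) U₂ hU₂ h2 p
  set α : ℂ := star ν₁ ⬝ᵥ ν₂ with hα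
  have htr : ∀ σ : Matrix mA mA ℂ,
      (∑ p : Fin k × mB, A p.1 p.2 ν₂ * σ * (A p.1 p.2 ν₁)ᴴ).trace = α * σ.trace := by
    intro σ
    rw [← key σ ν₂ ν₁, trace_ptraceB, hTP, Matrix.trace_kronecker, _root_.trace_vecMulVec]
    ring
  set s : ℂ := ∑ p : Fin k × mB, d p * star (c p) with hs
  have htr2 : ∀ σ : Matrix mA mA ℂ, s * ((U₁ᴴ * U₂) * σ).trace = α * σ.trace := by
    intro σ
    rw [← htr σ, Matrix.trace_sum, hs, Finset.sum_mul]
    refine Finset.sum_congr rfl fun p _ => ?_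
    rw [hc p, hd p]
    simp only [Matrix.conjTranspose_smul, Matrix.smul_mul, Matrix.mul_smul, Matrix.trace_smul,
      smul_eq_mul]
    rw [Matrix.trace_mul_cycle, Matrix.trace_mul_cycle]
    ring
  have hmat : ∀ i j, s * (U₁ᴴ * U₂) i j = α * (if i = j then 1 else 0) := by
    intro i j
    have h0 := htr2 (Matrix.single j i 1)
    rwa [trace_mul_stdBasis, trace_stdBasis] at h0
  have hs0 : s ≠ 0 := by
    intro h0
    have := hmat a₀ a₀
    rw [h0, if_pos rfl, mul_one, zero_mul] at this
    exact hover this.symm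
  set lam : ℂ := α / s with hlam
  have hUU : U₁ᴴ * U₂ = lam • 1 := by
    ext i j
    have := hmat i j
    rw [Matrix.smul_apply, Matrix.one_apply, hlam]
    rw [smul_eq_mul, div_mul_eq_mul_div, eq_div_iff hs0, mul_comm _ s, this]
  have hU2 : U₂ = lam • U₁ := by
    have : U₁ * (U₁ᴴ * U₂) = U₂ := by rw [← Matrix.mul_assoc, hU₁.1, Matrix.one_mul]
    rw [← this, hUU, Matrix.mul_smul, Matrix.mul_one]
  have hlam1 : star lam * lam = 1 := by
    have h0 : U₂ᴴ * U₂ = (star lam * lam) • (1 : Matrix mA mA ℂ) := by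
      rw [hU2, Matrix.conjTranspose_smul, Matrix.smul_mul, Matrix.mul_smul, hU₁.2, smul_smul]
    rw [hU₂.2] at h0
    have := congrFun (congrFun h0 a₀) a₀
    simpa using this.symm
  rw [hU2]
  simp only [Matrix.conjTranspose_smul, Matrix.smul_mul, Matrix.mul_smul, smul_smul]
  rw [hlam1, one_smul]
end
end

section
/- Let H_A and H_B be finite-dimensional Hilbert spaces. If a channel N on H_A ⊗ H_B satisfies Tr_B[N(ρ ⊗ ξ)] = ρ for all states ρ on H_A and a fixed pure state ξ on H_B, then there exists a state σ on H_B, independent of ρ, such that N(ρ ⊗ ξ) = ρ ⊗ σ for all states ρ. -/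
open Matrix BigOperators
open scoped Kronecker ComplexOrder

noncomputable section

lemma vmv_mulVec {n : Type*} [Fintype n] (v w x : n → ℂ) :
    Matrix.vecMulVec v w *ᵥ x = (w ⬝ᵥ x) • v := by
  ext i
  simp [Matrix.mulVec, dotProduct, Matrix.vecMulVec_apply, Finset.sum_mul, mul_assoc,
    mul_comm (v i)]

lemma outer_psd {n : Type*} [Fintype n] (v : n → ℂ) :
    (Matrix.vecMulVec v (star v)).PosSemidef := by
  rw [Matrix.posSemidef_iff_dotProduct_mulVec]
  constructor
  · ext i j
    simp [Matrix.conjTranspose_apply, Matrix.vecMulVec_apply, mul_comm]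
  · intro x
    rw [vmv_mulVec, dotProduct_smul]
    have h1 : star v ⬝ᵥ x = star (star x ⬝ᵥ v) := by
      rw [Matrix.star_dotProduct]
    rw [h1, smul_eq_mul]
    exact star_mul_self_nonneg _

lemma outer_trace {n : Type*} [Fintype n] (v : n → ℂ) :
    (Matrix.vecMulVec v (star v)).trace = star v ⬝ᵥ v := by
  simp [Matrix.trace, Matrix.diag, Matrix.vecMulVec_apply, dotProduct, mul_comm]

lemma conj_outer {n : Type*} [Fintype n] (M : Matrix n n ℂ) (u : n → ℂ) :
    M * Matrix.vecMulVec u (star u) * Mᴴ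
      = Matrix.vecMulVec (M *ᵥ u) (star (M *ᵥ u)) := by
  ext x y
  simp only [Matrix.mul_apply, Matrix.vecMulVec_apply, Matrix.conjTranspose_apply,
    Matrix.mulVec, dotProduct, Pi.star_apply, star_sum, star_mul', Finset.sum_mul,
    Finset.mul_sum]
  apply Finset.sum_congr rfl; intro a _
  apply Finset.sum_congr rfl; intro b _
  ring

lemma sum_outer_psd {n ι : Type*} [Fintype n] [Fintype ι] (v : ι → n → ℂ) :
    (∑ i, Matrix.vecMulVec (v i) (star (v i))).PosSemidef := by
  have h : ∀ s : Finset ι, (∑ i ∈ s, Matrix.vecMulVec (v i) (star (v i))).PosSemidef := by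
    intro s
    classical
    induction s using Finset.induction_on with
    | empty => simpa using Matrix.PosSemidef.zero
    | insert _ _ h ih =>
      rw [Finset.sum_insert h]
      exact (outer_psd _).add ih
  exact h _

lemma perp_span {n : Type*} [Fintype n] (u v : n → ℂ)
    (h : ∀ w : n → ℂ, star u ⬝ᵥ w = 0 → star w ⬝ᵥ v = 0) :
    ∃ c : ℂ, v = c • u := by
  by_cases hu : u = 0
  · refine ⟨0, ?_⟩
    have h0 := h v (by simp [hu])
    rw [dotProduct_star_self_eq_zero.mp h0]
    simp
  · have ht : star u ⬝ᵥ u ≠ 0 := fun h0 => hu (dotProduct_star_self_eq_zero.mp h0)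
    set t := star u ⬝ᵥ u with hT
    refine ⟨(star u ⬝ᵥ v) / t, ?_⟩
    set c := (star u ⬝ᵥ v) / t with hC
    set r := v - c • u with hr
    have hur : star u ⬝ᵥ r = 0 := by
      rw [hr, dotProduct_sub, dotProduct_smul, smul_eq_mul, ← hT, hC]
      field_simp
      simp
    have hru : star r ⬝ᵥ u = 0 := by
      have := Matrix.star_dotProduct u r
      rw [hur] at this
      have := congrArg star this
      simpa using this.symm
    have h2 := h r hur
    have hrr : star r ⬝ᵥ r = 0 := by
      have hv : v = r + c • u := by simp [hr]
      rw [hv, dotProduct_add, dotProduct_smul, smul_eq_mul, hru, mul_zero,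
        add_zero] at h2
      exact h2
    have : r = 0 := dotProduct_star_self_eq_zero.mp hrr
    have : v = c • u := by
      have := congrArg (· + c • u) (hr ▸ this)
      simpa [sub_add_cancel] using this
    exact this

lemma scalar_of_eigen {n : Type*} [Fintype n] [DecidableEq n] (M : Matrix n n ℂ)
    (h : ∀ u : n → ℂ, ∃ c : ℂ, M *ᵥ u = c • u) :
    ∃ c : ℂ, M = c • (1 : Matrix n n ℂ) := by
  cases isEmpty_or_nonempty n with
  | inl he => exact ⟨0, by ext i j; exact absurd trivial (by exact (IsEmpty.false i).elim)⟩
  | inr hne =>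
    obtain ⟨i0⟩ := hne
    obtain ⟨c, hc⟩ := h (Pi.single i0 1)
    refine ⟨c, ?_⟩
    ext i j
    obtain ⟨cj, hcj⟩ := h (Pi.single j 1)
    have hMj : ∀ i', M i' j = cj * (Pi.single j 1 : n → ℂ) i' := by
      intro i'
      have := congrFun hcj i'
      simpa [Matrix.mulVec_single] using this
    have hcj_eq : cj = c := by
      by_cases hji : j = i0
      · subst hji
        have h1 := congrFun hcj j
        have h2 := congrFun hc j
        simp [Matrix.mulVec_single] at h1 h2
        rw [h1] at h2; exact h2
      · obtain ⟨d, hd⟩ := h ((Pi.single i0 1 : n → ℂ) + Pi.single j 1)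
        have hl : M *ᵥ ((Pi.single i0 1 : n → ℂ) + Pi.single j 1)
            = c • (Pi.single i0 1 : n → ℂ) + cj • (Pi.single j 1 : n → ℂ) := by
          rw [Matrix.mulVec_add, hc, hcj]
        have hd1' := congrFun hl i0
        have hd2' := congrFun hl j
        rw [hd] at hd1' hd2'
        simp [Pi.single_apply, hji, Ne.symm hji] at hd1' hd2'
        rw [← hd1', ← hd2']
    rw [hMj i, hcj_eq]
    by_cases hij : i = j <;>
      simp [Matrix.one_apply, Pi.single_apply, Matrix.smul_apply, hij, eq_comm]

/-- If the induced channel on A is the identity, the environment output is a fixed state. -/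
theorem stmt_5 {mA mB : Type*} [Fintype mA] [DecidableEq mA] [Fintype mB] [DecidableEq mB]
    (N : Matrix (mA × mB) (mA × mB) ℂ →ₗ[ℂ] Matrix (mA × mB) (mA × mB) ℂ)
    (hN : IsCPTP N)
    (ν : mB → ℂ) (hν : star ν ⬝ᵥ ν = 1)
    (ξ : Matrix mB mB ℂ) (hξ : ξ = Matrix.vecMulVec ν (star ν))
    (hid : ∀ ρ : Matrix mA mA ℂ, IsState ρ → ptraceB (N (ρ ⊗ₖ ξ)) = ρ) :
    ∃ σ : Matrix mB mB ℂ, IsState σ ∧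
      ∀ ρ : Matrix mA mA ℂ, IsState ρ → N (ρ ⊗ₖ ξ) = ρ ⊗ₖ σ := by
  obtain ⟨htr, k, K, hK⟩ := hN
  cases isEmpty_or_nonempty mA with
  | inl hA =>
    refine ⟨Matrix.vecMulVec ν (star ν), ⟨outer_psd ν, by rw [outer_trace]; exact hν⟩, ?_⟩
    intro ρ hρ
    exfalso
    have : ρ.trace = 0 := by simp [Matrix.trace]
    rw [hρ.2] at this
    exact one_ne_zero this
  | inr hA =>
    -- the conditional Kraus operators on H_A
    set Mm : Fin k → mB → Matrix mA mA ℂ :=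
      fun i b => Matrix.of fun x a => ∑ c, K i (x, b) (a, c) * ν c with hMm
    -- entrywise formula for N (X ⊗ ξ)
    have key : ∀ (X : Matrix mA mA ℂ) (x y : mA) (b b' : mB),
        N (X ⊗ₖ ξ) (x, b) (y, b') = ∑ i, (Mm i b * X * (Mm i b')ᴴ) x y := by
      intro X x y b b'
      rw [hK, hξ, Matrix.sum_apply]
      apply Finset.sum_congr rfl
      intro i _
      simp only [hMm, Matrix.mul_apply, Matrix.kroneckerMap_apply, Matrix.conjTranspose_apply,
        Matrix.of_apply, Matrix.vecMulVec_apply, Pi.star_apply, Fintype.sum_prod_type,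
        Finset.sum_mul, Finset.mul_sum, star_sum, star_mul']
      refine Finset.sum_congr rfl fun a _ => ?_
      refine Finset.sum_congr rfl fun c _ => ?_
      refine Finset.sum_congr rfl fun a2 _ => ?_
      refine Finset.sum_congr rfl fun c2 _ => ?_
      ring
    -- identity channel condition on outer products
    have houter : ∀ u : mA → ℂ,
        ptraceB (N (Matrix.vecMulVec u (star u) ⊗ₖ ξ)) = Matrix.vecMulVec u (star u) := by
      intro u
      by_cases hu : u = 0
      · subst hu
        have h0 : (Matrix.vecMulVec (0 : mA → ℂ) (star (0 : mA → ℂ))) = 0 := by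
          ext i j; simp [Matrix.vecMulVec_apply]
        rw [h0, Matrix.zero_kronecker, map_zero]
        ext i j; simp [ptraceB]
      · -- normalize to a state
        have ht0 : star u ⬝ᵥ u ≠ 0 := fun h0 => hu (dotProduct_star_self_eq_zero.mp h0)
        set t : ℂ := star u ⬝ᵥ u with hT
        have htreal : ∃ s : ℝ, 0 ≤ s ∧ t = (s : ℂ) := by
          refine ⟨∑ i, Complex.normSq (u i), Finset.sum_nonneg fun i _ => Complex.normSq_nonneg _, ?_⟩
          rw [hT]
          simp only [dotProduct, Pi.star_apply, RCLike.star_def]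
          push_cast
          exact Finset.sum_congr rfl fun i _ => (Complex.normSq_eq_conj_mul_self).symm ▸ rfl
        obtain ⟨s, hs0, hst⟩ := htreal
        have hsne : s ≠ 0 := fun h => ht0 (by rw [hst, h]; simp)
        have hstate : IsState (t⁻¹ • Matrix.vecMulVec u (star u)) := by
          constructor
          · rw [Matrix.posSemidef_iff_dotProduct_mulVec]
            constructor
            · have hherm := (outer_psd u).1
              unfold Matrix.IsHermitian at hherm ⊢
              rw [Matrix.conjTranspose_smul, hherm]
              congr 1
              rw [hst]
              simp [Complex.ext_iff]
            · intro x
              rw [Matrix.smul_mulVec, dotProduct_smul, smul_eq_mul]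
              have h1 : (0 : ℂ) ≤ t⁻¹ := by
                rw [hst, ← Complex.ofReal_inv]
                exact_mod_cast inv_nonneg.mpr hs0
              exact mul_nonneg h1 ((outer_psd u).dotProduct_mulVec_nonneg x)
          · rw [Matrix.trace_smul, outer_trace, ← hT, smul_eq_mul, inv_mul_cancel₀ ht0]
        have hlin := hid _ hstate
        -- scale back up
        have : N ((t⁻¹ • Matrix.vecMulVec u (star u)) ⊗ₖ ξ)
            = t⁻¹ • N (Matrix.vecMulVec u (star u) ⊗ₖ ξ) := by
          rw [Matrix.smul_kronecker]; exact map_smul N _ _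
        rw [this] at hlin
        have hpt : ∀ (c : ℂ) (A : Matrix (mA × mB) (mA × mB) ℂ),
            ptraceB (c • A) = c • ptraceB A := by
          intro c A
          ext i j
          simp [ptraceB, Finset.mul_sum]
        rw [hpt] at hlin
        have := congrArg (fun A => t • A) hlin
        simpa [smul_smul, mul_inv_cancel₀ ht0] using this
    -- sum of outer products identity
    have hsumouter : ∀ u : mA → ℂ,
        (∑ i, ∑ b, Matrix.vecMulVec (Mm i b *ᵥ u) (star (Mm i b *ᵥ u)))
          = Matrix.vecMulVec u (star u) := by
      intro u
      have h2 : ptraceB (N (Matrix.vecMulVec u (star u) ⊗ₖ ξ))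
          = ∑ i, ∑ b, Mm i b * Matrix.vecMulVec u (star u) * (Mm i b)ᴴ := by
        ext x y
        show (∑ c, N (Matrix.vecMulVec u (star u) ⊗ₖ ξ) (x, c) (y, c)) = _
        simp only [key, Matrix.sum_apply]
        rw [Finset.sum_comm (s := (Finset.univ : Finset mB))
          (t := (Finset.univ : Finset (Fin k)))]
      have h3 := (h2.symm.trans (houter u))
      calc (∑ i, ∑ b, Matrix.vecMulVec (Mm i b *ᵥ u) (star (Mm i b *ᵥ u)))
          = ∑ i, ∑ b, Mm i b * Matrix.vecMulVec u (star u) * (Mm i b)ᴴ := by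
            refine Finset.sum_congr rfl fun i _ => Finset.sum_congr rfl fun b _ => ?_
            rw [conj_outer]
        _ = Matrix.vecMulVec u (star u) := h3
    -- each conditional Kraus operator is scalar
    have heig : ∀ (i : Fin k) (b : mB), ∃ c : ℂ, Mm i b = c • (1 : Matrix mA mA ℂ) := by
      intro i b
      apply scalar_of_eigen
      intro u
      apply perp_span
      intro w hw
      -- evaluate the sum-of-outers identity against w
      have hS := congrArg (fun A : Matrix mA mA ℂ => star w ⬝ᵥ (A *ᵥ w)) (hsumouter u)
      have hterm : ∀ (M : Matrix mA mA ℂ) (v : mA → ℂ),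
          star w ⬝ᵥ (Matrix.vecMulVec v (star v) *ᵥ w)
            = star (star w ⬝ᵥ v) * (star w ⬝ᵥ v) := by
        intro M v
        rw [vmv_mulVec, dotProduct_smul, smul_eq_mul, Matrix.star_dotProduct]
      have hrhs : star w ⬝ᵥ (Matrix.vecMulVec u (star u) *ᵥ w) = 0 := by
        rw [hterm 1 u]
        have : star w ⬝ᵥ u = 0 := by
          have := Matrix.star_dotProduct u w
          rw [hw] at this
          have := congrArg star this
          simpa using this.symm
        rw [this]; simp
      have hLHS : (∑ i', ∑ b', star (star w ⬝ᵥ (Mm i' b' *ᵥ u)) * (star w ⬝ᵥ (Mm i' b' *ᵥ u)))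
          = 0 := by
        rw [← hrhs, ← hS]
        let L : Matrix mA mA ℂ →ₗ[ℂ] ℂ :=
          { toFun := fun A => star w ⬝ᵥ (A *ᵥ w)
            map_add' := fun A B => by
              simp only [Matrix.add_mulVec, dotProduct_add]
            map_smul' := fun c A => by
              simp only [Matrix.smul_mulVec, dotProduct_smul, RingHom.id_apply] }
        have hsplit : star w ⬝ᵥ ((∑ i', ∑ b',
              Matrix.vecMulVec (Mm i' b' *ᵥ u) (star (Mm i' b' *ᵥ u))) *ᵥ w)
            = ∑ i', ∑ b', star w ⬝ᵥ (Matrix.vecMulVec (Mm i' b' *ᵥ u)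
                (star (Mm i' b' *ᵥ u)) *ᵥ w) := by
          show L (∑ i', ∑ b', Matrix.vecMulVec (Mm i' b' *ᵥ u) (star (Mm i' b' *ᵥ u))) = _
          rw [map_sum]
          exact Finset.sum_congr rfl fun i' _ => by rw [map_sum]; rfl
        rw [hsplit]
        refine Finset.sum_congr rfl fun i' _ => ?_
        exact Finset.sum_congr rfl fun b' _ => (hterm 1 _).symm
      -- each term is nonneg, so each is zero
      have hz : star (star w ⬝ᵥ (Mm i b *ᵥ u)) * (star w ⬝ᵥ (Mm i b *ᵥ u)) = 0 := by
        have hnn : ∀ (i' : Fin k) (b' : mB),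
            (0:ℂ) ≤ star (star w ⬝ᵥ (Mm i' b' *ᵥ u)) * (star w ⬝ᵥ (Mm i' b' *ᵥ u)) :=
          fun i' b' => star_mul_self_nonneg _
        have h1 : ∀ i' ∈ Finset.univ,
            (0:ℂ) ≤ ∑ b', star (star w ⬝ᵥ (Mm i' b' *ᵥ u)) * (star w ⬝ᵥ (Mm i' b' *ᵥ u)) :=
          fun i' _ => Finset.sum_nonneg fun b' _ => hnn i' b'
        have h2 := (Finset.sum_eq_zero_iff_of_nonneg h1).mp hLHS i (Finset.mem_univ i)
        have h3 := (Finset.sum_eq_zero_iff_of_nonneg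
          (fun b' _ => hnn i b')).mp h2 b (Finset.mem_univ b)
        exact h3
      have : star w ⬝ᵥ (Mm i b *ᵥ u) = 0 := by
        by_contra hne
        exact hne (by
          have := mul_eq_zero.mp hz
          rcases this with h | h
          · simpa using congrArg star h
          · exact h)
      exact this
    choose cc hcc using heig
    -- the output state on B
    set σ : Matrix mB mB ℂ :=
      ∑ i, Matrix.vecMulVec (fun b => cc i b) (star fun b => cc i b) with hσ
    have hσpsd : σ.PosSemidef := by
      rw [hσ]
      exact sum_outer_psd _
    have hσapp : ∀ b b', σ b b' = ∑ i, cc i b * star (cc i b') := by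
      intro b b'
      rw [hσ, Matrix.sum_apply]
      exact Finset.sum_congr rfl fun i _ => by simp [Matrix.vecMulVec_apply]
    -- the full channel output
    have hNX : ∀ X : Matrix mA mA ℂ, N (X ⊗ₖ ξ) = X ⊗ₖ σ := by
      intro X
      ext ⟨x, b⟩ ⟨y, b'⟩
      rw [key X x y b b', Matrix.kroneckerMap_apply, hσapp]
      have : ∀ i : Fin k, (Mm i b * X * (Mm i b')ᴴ) x y
          = cc i b * star (cc i b') * X x y := by
        intro i
        rw [hcc i b, hcc i b']
        simp [Matrix.smul_mul, Matrix.mul_smul, Matrix.conjTranspose_smul, Matrix.smul_apply,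
          smul_eq_mul]
        ring
      rw [Finset.sum_congr rfl fun i _ => this i, ← Finset.sum_mul]
      ring
    -- trace of σ is one
    have hσtr : σ.trace = 1 := by
      obtain ⟨i0⟩ := hA
      set u0 : mA → ℂ := Pi.single i0 1 with hu0
      have hptr := houter u0
      rw [hNX] at hptr
      have := congrFun (congrFun hptr i0) i0
      have hentry : ptraceB (Matrix.vecMulVec u0 (star u0) ⊗ₖ σ) i0 i0
          = ∑ b, Matrix.vecMulVec u0 (star u0) i0 i0 * σ b b := by
        show (∑ b, (Matrix.vecMulVec u0 (star u0) ⊗ₖ σ) (i0, b) (i0, b)) = _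
        exact Finset.sum_congr rfl fun b _ => rfl
      rw [hentry] at this
      have hu00 : Matrix.vecMulVec u0 (star u0) i0 i0 = 1 := by
        simp [Matrix.vecMulVec_apply, hu0]
      rw [hu00] at this
      simp only [one_mul] at this
      rw [Matrix.trace]
      simpa [Matrix.diag] using this
    exact ⟨σ, ⟨hσpsd, hσtr⟩, fun ρ _ => hNX ρ⟩
end
end
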